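/- Let φ₁ = arctan(1/√2), L = π/2 − 5φ₁/3, d₉ = 2√2/√(1 + sin²(5φ₁/3)) and d₁₀ = L/sin(L). Then the function x ↦ √(d₁₀/x + d₉) is interval-integrable on (0, L) and (1/2)·∫ from 0 to L of √(d₁₀/x + d₉) dx ≤ 0.89. -/

import Mathlib

open Real MeasureTheory

namespace NewtonianTetrahedralAux

lemma taylor_sin {q s1 s2 : ℝ} (h0 : 0 ≤ q) (h1 : q ≤ 1)
    (hl : s1 ≤ q - q^3/6 - q^4*(5/96)) (hu : q - q^3/6 + q^4*(5/96) ≤ s2) :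
    s1 ≤ Real.sin q ∧ Real.sin q ≤ s2 := by
  have h := abs_le.mp (Real.sin_bound (x := q) (by rwa [abs_of_nonneg h0]))
  rw [abs_of_nonneg h0] at h
  constructor <;> nlinarith [h.1, h.2, mul_le_mul_of_nonneg_left h1 (pow_nonneg h0 4)]

lemma taylor_cos {q c1 c2 : ℝ} (h0 : 0 ≤ q) (h1 : q ≤ 1)
    (hl : c1 ≤ 1 - q^2/2 - q^4*(5/96)) (hu : 1 - q^2/2 + q^4*(5/96) ≤ c2) :
    c1 ≤ Real.cos q ∧ Real.cos q ≤ c2 := by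
  have h := abs_le.mp (Real.cos_bound (x := q) (by rwa [abs_of_nonneg h0]))
  rw [abs_of_nonneg h0] at h
  constructor <;> nlinarith [h.1, h.2]

lemma dbl {x s1 s2 c1 c2 : ℝ} (hs : s1 ≤ Real.sin x ∧ Real.sin x ≤ s2)
    (hc : c1 ≤ Real.cos x ∧ Real.cos x ≤ c2) (h0s : 0 ≤ s1) (h0c : 0 ≤ c1) :
    (2*s1*c1 ≤ Real.sin (2*x) ∧ Real.sin (2*x) ≤ 2*s2*c2) ∧
    (1 - 2*s2^2 ≤ Real.cos (2*x) ∧ Real.cos (2*x) ≤ 1 - 2*s1^2) := by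
  have hpy := Real.sin_sq_add_cos_sq x
  rw [Real.sin_two_mul, Real.cos_two_mul]
  exact ⟨⟨by nlinarith [hs.1, hs.2, hc.1, hc.2], by nlinarith [hs.1, hs.2, hc.1, hc.2]⟩,
    ⟨by nlinarith [hs.1, hs.2], by nlinarith [hs.1, hs.2]⟩⟩

/-- Full two-doubling evaluation of `sin q, cos q` at `q = 4*q₀`. -/
lemma sincos4 {q0 sA1 sA2 cA1 cA2 sB1 sB2 cB1 cB2 sC1 sC2 cC1 cC2 : ℝ}
    (h0 : 0 ≤ q0) (h1 : q0 ≤ 1)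
    (hsl : sA1 ≤ q0 - q0^3/6 - q0^4*(5/96)) (hsu : q0 - q0^3/6 + q0^4*(5/96) ≤ sA2)
    (hcl : cA1 ≤ 1 - q0^2/2 - q0^4*(5/96)) (hcu : 1 - q0^2/2 + q0^4*(5/96) ≤ cA2)
    (h0sA : 0 ≤ sA1) (h0cA : 0 ≤ cA1)
    (hB1 : sB1 ≤ 2*sA1*cA1) (hB2 : 2*sA2*cA2 ≤ sB2)
    (hB3 : cB1 ≤ 1 - 2*sA2^2) (hB4 : 1 - 2*sA1^2 ≤ cB2)
    (h0sB : 0 ≤ sB1) (h0cB : 0 ≤ cB1)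
    (hC1 : sC1 ≤ 2*sB1*cB1) (hC2 : 2*sB2*cB2 ≤ sC2)
    (hC3 : cC1 ≤ 1 - 2*sB2^2) (hC4 : 1 - 2*sB1^2 ≤ cC2) :
    (sC1 ≤ Real.sin (4*q0) ∧ Real.sin (4*q0) ≤ sC2) ∧
    (cC1 ≤ Real.cos (4*q0) ∧ Real.cos (4*q0) ≤ cC2) := by
  have hA := taylor_sin h0 h1 hsl hsu
  have hAc := taylor_cos h0 h1 hcl hcu
  have hB := dbl hA hAc h0sA h0cA
  have hBs : sB1 ≤ Real.sin (2*q0) ∧ Real.sin (2*q0) ≤ sB2 :=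
    ⟨le_trans hB1 hB.1.1, le_trans hB.1.2 hB2⟩
  have hBc : cB1 ≤ Real.cos (2*q0) ∧ Real.cos (2*q0) ≤ cB2 :=
    ⟨le_trans hB3 hB.2.1, le_trans hB.2.2 hB4⟩
  have hC := dbl hBs hBc h0sB h0cB
  have h4 : 2*(2*q0) = 4*q0 := by ring
  rw [h4] at hC
  exact ⟨⟨le_trans hC1 hC.1.1, le_trans hC.1.2 hC2⟩,
    ⟨le_trans hC3 hC.2.1, le_trans hC.2.2 hC4⟩⟩


lemma sqrt_add_le' {u v : ℝ} (hu : 0 ≤ u) (hv : 0 ≤ v) :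
    Real.sqrt (u + v) ≤ Real.sqrt u + Real.sqrt v := by
  rw [Real.sqrt_le_iff]
  refine ⟨by positivity, ?_⟩
  nlinarith [Real.sq_sqrt hu, Real.sq_sqrt hv, Real.sqrt_nonneg u, Real.sqrt_nonneg v,
    mul_nonneg (Real.sqrt_nonneg u) (Real.sqrt_nonneg v)]

lemma one_add_sq_lower {c : ℝ} (hl : (0.85450205:ℝ) ≤ c) :
    (1.31536069:ℝ)^2 ≤ 1 + c^2 := by nlinarith

lemma one_add_sq_upper {c : ℝ} (hl : (0.85450205:ℝ) ≤ c) (hu : c ≤ 0.85579889) :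
    1 + c^2 ≤ (1.31620354:ℝ)^2 := by nlinarith

lemma aL_bound {a b L : ℝ} (ha0 : 0 < a) (hb0 : 0 < b) (hL0 : 0 < L)
    (ha : a ≤ 1.0557378) (hb : b ≤ 2.15030541) (hL : L ≤ 0.5461299) :
    a*L + b*L^2 ≤ (1.10359209:ℝ)^2 := by
  nlinarith [mul_le_mul ha hL (le_of_lt hL0) (by norm_num : (0:ℝ) ≤ 1.0557378),
    mul_le_mul hb (mul_le_mul hL hL (le_of_lt hL0) (by norm_num : (0:ℝ) ≤ 0.5461299))
      (by positivity) (by norm_num : (0:ℝ) ≤ 2.15030541)]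

lemma s_bound {s : ℝ} (h0 : 0 ≤ s) (h : s^2 ≤ 1.12178929) : s ≤ 1.05914555 := by
  nlinarith [sq_nonneg (s - 1.05914555)]

lemma sqrt_one_add_sq_bound {s : ℝ} (h : s^2 ≤ 1.12178929) :
    1 + s^2 ≤ (1.4566363:ℝ)^2 := by nlinarith

end NewtonianTetrahedralAux

set_option maxHeartbeats 2000000 in
open NewtonianTetrahedralAux in
/-- With `φ₁ = arctan(1/√2)`, `L = π/2 − 5φ₁/3`,
`d₉ = 2√2/√(1 + sin²(5φ₁/3))` and `d₁₀ = L/sin L`, the function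
`x ↦ √(d₁₀/x + d₉)` is interval-integrable on `(0, L)` and
`(1/2)∫₀^L √(d₁₀/x + d₉) dx ≤ 0.89`. -/
theorem newtonian_tetrahedral_left_branch_bound :
    IntervalIntegrable
      (fun x : ℝ => Real.sqrt
        (((π/2 - 5 * Real.arctan (1 / Real.sqrt 2) / 3) /
            Real.sin (π/2 - 5 * Real.arctan (1 / Real.sqrt 2) / 3)) / x +
          2 * Real.sqrt 2 / Real.sqrt (1 + Real.sin (5 * Real.arctan (1 / Real.sqrt 2) / 3) ^ 2)))
      volume 0 (π/2 - 5 * Real.arctan (1 / Real.sqrt 2) / 3) ∧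
    (1/2) * ∫ x in (0:ℝ)..(π/2 - 5 * Real.arctan (1 / Real.sqrt 2) / 3),
        Real.sqrt
          (((π/2 - 5 * Real.arctan (1 / Real.sqrt 2) / 3) /
              Real.sin (π/2 - 5 * Real.arctan (1 / Real.sqrt 2) / 3)) / x +
            2 * Real.sqrt 2 / Real.sqrt (1 + Real.sin (5 * Real.arctan (1 / Real.sqrt 2) / 3) ^ 2))
      ≤ 0.89 := by
  have pi_gt := Real.pi_gt_d6
  have pi_lt := Real.pi_lt_d6
  obtain ⟨φ, hφdef⟩ : ∃ x : ℝ, x = Real.arctan (1 / Real.sqrt 2) := ⟨_, rfl⟩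
  rw [← hφdef]
  obtain ⟨L, hLdef⟩ : ∃ x : ℝ, x = π/2 - 5 * φ / 3 := ⟨_, rfl⟩
  rw [← hLdef]
  -- rewrite sin(5φ/3) as cos L
  rw [show 5 * φ / 3 = π/2 - L by rw [hLdef]; ring, Real.sin_pi_div_two_sub]
  obtain ⟨a, hadef⟩ : ∃ x : ℝ, x = L / Real.sin L := ⟨_, rfl⟩
  rw [← hadef]
  obtain ⟨b, hbdef⟩ : ∃ x : ℝ, x = 2 * Real.sqrt 2 / Real.sqrt (1 + Real.cos L ^ 2) := ⟨_, rfl⟩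
  rw [← hbdef]
  -- ================= numeric bounds on φ =================
  have hsq2 : (1 / Real.sqrt 2 : ℝ)^2 = 1/2 := by
    rw [div_pow, one_pow, Real.sq_sqrt (by norm_num : (0:ℝ) ≤ 2)]
  have hφcos : Real.cos φ = 1 / Real.sqrt (3/2) := by
    rw [hφdef, Real.cos_arctan, hsq2]
    norm_num
  have hs32l : (1.2247448 : ℝ) ≤ Real.sqrt (3/2) :=
    (Real.le_sqrt (by norm_num) (by norm_num)).mpr (by norm_num)
  have hs32u : Real.sqrt (3/2) ≤ 1.2247449 :=
    (Real.sqrt_le_left (by norm_num)).mpr (by norm_num)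
  have hφcl : (1/1.2247449 : ℝ) ≤ Real.cos φ := by
    rw [hφcos]; exact one_div_le_one_div_of_le (by norm_num [Real.sqrt_pos]) hs32u
  have hφcu : Real.cos φ ≤ 1/1.2247448 := by
    rw [hφcos]; exact one_div_le_one_div_of_le (by norm_num) hs32l
  -- Taylor chains
  have hr1 := sincos4 (q0 := 0.1537)
    (sC1 := 0.5766419) (sC2 := 0.57691646) (cC1 := 0.81681881) (cC2 := 0.81697945)
    (sA1 := 0.15306577) (sA2 := 0.15312391) (cA1 := 0.98815908) (cA2 := 0.98821723)
    (sB1 := 0.30250666) (sB2 := 0.30263938) (cB1 := 0.95310613) (cB2 := 0.95314175)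
    (by norm_num) (by norm_num) (by norm_num) (by norm_num) (by norm_num) (by norm_num)
    (by norm_num) (by norm_num) (by norm_num) (by norm_num) (by norm_num) (by norm_num)
    (by norm_num) (by norm_num) (by norm_num) (by norm_num) (by norm_num) (by norm_num)
  have hr2 := sincos4 (q0 := 0.15405)
    (sC1 := 0.57778349) (sC2 := 0.57806065) (cC1 := 0.81600971) (cC2 := 0.81617221)
    (sA1 := 0.15341136) (sA2 := 0.15347003) (cA1 := 0.98810496) (cA2 := 0.98816364)
    (sB1 := 0.30317305) (sB2 := 0.30330701) (cB1 := 0.95289389) (cB2 := 0.95292991)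
    (by norm_num) (by norm_num) (by norm_num) (by norm_num) (by norm_num) (by norm_num)
    (by norm_num) (by norm_num) (by norm_num) (by norm_num) (by norm_num) (by norm_num)
    (by norm_num) (by norm_num) (by norm_num) (by norm_num) (by norm_num) (by norm_num)
  have hl1 := sincos4 (q0 := 0.135949)
    (sC1 := 0.51729691) (sC2 := 0.51746176) (cC1 := 0.85571275) (cC2 := 0.85579889)
    (sA1 := 0.13551243) (sA2 := 0.13554802) (cA1 := 0.99074114) (cA2 := 0.99077673)
    (sB1 := 0.26851547) (sB2 := 0.26859565) (cB1 := 0.96325346) (cB2 := 0.96327277)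
    (by norm_num) (by norm_num) (by norm_num) (by norm_num) (by norm_num) (by norm_num)
    (by norm_num) (by norm_num) (by norm_num) (by norm_num) (by norm_num) (by norm_num)
    (by norm_num) (by norm_num) (by norm_num) (by norm_num) (by norm_num) (by norm_num)
  have hl2 := sincos4 (q0 := 0.136532475)
    (sC1 := 0.5192911) (sC2 := 0.5194589) (cC1 := 0.85450205) (cC2 := 0.85459009)
    (sA1 := 0.13609019) (sA2 := 0.13612639) (cA1 := 0.99066134) (cA2 := 0.99069755)
    (sB1 := 0.26963857) (sB2 := 0.26972017) (cB1 := 0.96293921) (cB2 := 0.96295893)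
    (by norm_num) (by norm_num) (by norm_num) (by norm_num) (by norm_num) (by norm_num)
    (by norm_num) (by norm_num) (by norm_num) (by norm_num) (by norm_num) (by norm_num)
    (by norm_num) (by norm_num) (by norm_num) (by norm_num) (by norm_num) (by norm_num)
  rw [show (4*(0.1537:ℝ)) = 0.6148 by norm_num] at hr1
  rw [show (4*(0.15405:ℝ)) = 0.6162 by norm_num] at hr2
  rw [show (4*(0.135949:ℝ)) = 0.543796 by norm_num] at hl1
  rw [show (4*(0.136532475:ℝ)) = 0.5461299 by norm_num] at hl2
  -- bounds on φ
  have hφ0 : 0 ≤ φ := by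
    have h := Real.arctan_strictMono.monotone (show (0:ℝ) ≤ 1 / Real.sqrt 2 by positivity)
    rw [Real.arctan_zero] at h
    rw [hφdef]
    exact h
  have hφπ : φ ≤ π := by
    have := Real.arctan_lt_pi_div_two (1 / Real.sqrt 2)
    rw [← hφdef] at this
    linarith [Real.pi_pos]
  have hφu : φ ≤ 0.6162 := by
    by_contra hcon
    push_neg at hcon
    have h := Real.strictAntiOn_cos
      (Set.mem_Icc.mpr ⟨by norm_num, by linarith⟩)
      (Set.mem_Icc.mpr ⟨hφ0, hφπ⟩) hcon
    have hnum : (0.81617221:ℝ) < 1/1.2247449 := by norm_num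
    linarith [hr2.2.2, hφcl]
  have hφl : (0.6148:ℝ) ≤ φ := by
    by_contra hcon
    push_neg at hcon
    have h := Real.strictAntiOn_cos
      (Set.mem_Icc.mpr ⟨hφ0, hφπ⟩)
      (Set.mem_Icc.mpr ⟨by norm_num, by linarith⟩) hcon
    have hnum : (1/1.2247448:ℝ) < 0.81681881 := by norm_num
    linarith [hr1.2.1, hφcu]
  -- bounds on L
  have hL1 : (0.543796:ℝ) ≤ L := by rw [hLdef]; linarith
  have hL2 : L ≤ 0.5461299 := by rw [hLdef]; linarith
  have hLpos : 0 < L := lt_of_lt_of_le (by norm_num) hL1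
  -- bounds on sin L and cos L
  have hLhalf : L ≤ π/2 := by rw [hLdef]; linarith
  have hLmem : L ∈ Set.Icc (-(π/2)) (π/2) :=
    Set.mem_Icc.mpr ⟨by linarith, hLhalf⟩
  have hl1mem : (0.543796:ℝ) ∈ Set.Icc (-(π/2)) (π/2) :=
    Set.mem_Icc.mpr ⟨by linarith, by linarith⟩
  have hl2mem : (0.5461299:ℝ) ∈ Set.Icc (-(π/2)) (π/2) :=
    Set.mem_Icc.mpr ⟨by linarith, by linarith⟩
  have hsinL1 : (0.51729691:ℝ) ≤ Real.sin L :=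
    le_trans hl1.1.1 (Real.strictMonoOn_sin.monotoneOn hl1mem hLmem hL1)
  have hsinL2 : Real.sin L ≤ 0.5194589 :=
    le_trans (Real.strictMonoOn_sin.monotoneOn hLmem hl2mem hL2) hl2.1.2
  have hLmem' : L ∈ Set.Icc (0:ℝ) π :=
    Set.mem_Icc.mpr ⟨le_of_lt hLpos, by linarith⟩
  have hl1mem' : (0.543796:ℝ) ∈ Set.Icc (0:ℝ) π :=
    Set.mem_Icc.mpr ⟨by norm_num, by linarith⟩
  have hl2mem' : (0.5461299:ℝ) ∈ Set.Icc (0:ℝ) π :=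
    Set.mem_Icc.mpr ⟨by norm_num, by linarith⟩
  have hcosL1 : (0.85450205:ℝ) ≤ Real.cos L :=
    le_trans hl2.2.1 (Real.strictAntiOn_cos.antitoneOn hLmem' hl2mem' hL2)
  have hcosL2 : Real.cos L ≤ 0.85579889 :=
    le_trans (Real.strictAntiOn_cos.antitoneOn hl1mem' hLmem' hL1) hl1.2.2
  have hsinLpos : 0 < Real.sin L := by linarith
  -- bounds on a
  have ha1 : (1.04685086:ℝ) ≤ a := by
    rw [hadef]
    calc (1.04685086:ℝ) ≤ 0.543796/0.5194589 := by norm_num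
    _ ≤ L / Real.sin L := div_le_div₀ (le_of_lt hLpos) hL1 hsinLpos hsinL2
  have ha2 : a ≤ 1.0557378 := by
    rw [hadef]
    calc L / Real.sin L ≤ 0.5461299/0.51729691 :=
          div_le_div₀ (by norm_num) hL2 (by norm_num) hsinL1
    _ ≤ 1.0557378 := by norm_num
  have hapos : 0 < a := by linarith
  -- bounds on b
  have h2l : (1.4142135:ℝ) ≤ Real.sqrt 2 :=
    (Real.le_sqrt (by norm_num) (by norm_num)).mpr (by norm_num)
  have h2u : Real.sqrt 2 ≤ 1.4142136 :=
    (Real.sqrt_le_left (by norm_num)).mpr (by norm_num)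
  have hd1 : (1.31536069:ℝ) ≤ Real.sqrt (1 + Real.cos L ^ 2) :=
    (Real.le_sqrt (by norm_num) (by positivity)).mpr (one_add_sq_lower hcosL1)
  have hd2 : Real.sqrt (1 + Real.cos L ^ 2) ≤ 1.31620354 :=
    (Real.sqrt_le_left (by norm_num)).mpr (one_add_sq_upper hcosL1 hcosL2)
  have hdpos : (0:ℝ) < Real.sqrt (1 + Real.cos L ^ 2) := by linarith
  have hb1 : (2.14892827:ℝ) ≤ b := by
    rw [hbdef]
    calc (2.14892827:ℝ) ≤ (2*1.4142135)/1.31620354 := by norm_num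
    _ ≤ 2 * Real.sqrt 2 / Real.sqrt (1 + Real.cos L ^ 2) :=
        div_le_div₀ (by positivity) (by linarith) hdpos hd2
  have hb2 : b ≤ 2.15030541 := by
    rw [hbdef]
    calc 2 * Real.sqrt 2 / Real.sqrt (1 + Real.cos L ^ 2) ≤ (2*1.4142136)/1.31536069 :=
          div_le_div₀ (by norm_num) (by linarith) (by norm_num) hd1
    _ ≤ 2.15030541 := by norm_num
  have hbpos : 0 < b := by linarith
  -- ================= integrability =================
  have hfmeas : AEStronglyMeasurable (fun x : ℝ => Real.sqrt (a/x + b))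
      (volume.restrict (Set.uIoc (0:ℝ) L)) :=
    (Real.continuous_sqrt.measurable.comp
      ((measurable_const.div measurable_id).add measurable_const)).aestronglyMeasurable
  have hg : IntervalIntegrable (fun x : ℝ => Real.sqrt a * x ^ (-(1/2) : ℝ) + Real.sqrt b)
      volume 0 L :=
    ((intervalIntegral.intervalIntegrable_rpow' (by norm_num)).const_mul _).add
      intervalIntegrable_const
  have hsub : ∀ x : ℝ, x ∈ Set.Ioc 0 L →
      Real.sqrt (a/x + b) ≤ Real.sqrt a * x ^ (-(1/2) : ℝ) + Real.sqrt b := by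
    intro x hx
    have hx0 : 0 < x := hx.1
    have hax : 0 ≤ a / x := by positivity
    have h1 : Real.sqrt (a/x + b) ≤ Real.sqrt (a/x) + Real.sqrt b :=
      sqrt_add_le' hax (le_of_lt hbpos)
    have h2 : Real.sqrt (a/x) = Real.sqrt a * x ^ (-(1/2) : ℝ) := by
      rw [Real.sqrt_div (le_of_lt hapos) x, Real.rpow_neg (le_of_lt hx0),
        ← Real.sqrt_eq_rpow, div_eq_mul_inv]
    linarith [h1, h2.symm.le, h2.le]
  have hint : IntervalIntegrable (fun x : ℝ => Real.sqrt (a/x + b)) volume 0 L := by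
    apply hg.mono_fun hfmeas
    rw [Set.uIoc_of_le (le_of_lt hLpos)]
    filter_upwards [ae_restrict_mem measurableSet_Ioc] with x hx
    have hx0 : 0 < x := hx.1
    rw [Real.norm_eq_abs, Real.norm_eq_abs, abs_of_nonneg (Real.sqrt_nonneg _),
      abs_of_nonneg]
    · exact hsub x hx
    · have : (0:ℝ) ≤ x ^ (-(1/2) : ℝ) := Real.rpow_nonneg (le_of_lt hx0) _
      positivity
  refine ⟨hint, ?_⟩
  -- ================= FTC =================
  obtain ⟨F, hFdef⟩ : ∃ F : ℝ → ℝ, F = fun x =>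
      Real.sqrt (a*x + b*x^2) + (a / Real.sqrt b) * Real.arsinh (Real.sqrt (b/a) * Real.sqrt x) :=
    ⟨_, rfl⟩
  have hcont : ContinuousOn F (Set.Icc 0 L) := by
    rw [hFdef]
    apply Continuous.continuousOn
    apply Continuous.add
    · exact Real.continuous_sqrt.comp (by continuity)
    · exact continuous_const.mul
        (Real.continuous_arsinh.comp (continuous_const.mul Real.continuous_sqrt))
  have hderiv : ∀ x ∈ Set.Ioo (0:ℝ) L,
      HasDerivWithinAt F (Real.sqrt (a/x + b)) (Set.Ioi x) x := by
    rw [hFdef]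
    intro x hx
    have hx0 : 0 < x := hx.1
    have habx : 0 < a + b*x := add_pos hapos (mul_pos hbpos hx0)
    have haxbx : 0 < a*x + b*x^2 :=
      add_pos (mul_pos hapos hx0) (mul_pos hbpos (pow_pos hx0 2))
    have sxpos : 0 < Real.sqrt x := Real.sqrt_pos.mpr hx0
    have sabpos : 0 < Real.sqrt (a + b*x) := Real.sqrt_pos.mpr habx
    have sapos : 0 < Real.sqrt a := Real.sqrt_pos.mpr hapos
    have sbpos : 0 < Real.sqrt b := Real.sqrt_pos.mpr hbpos
    have h1 : HasDerivAt (fun y : ℝ => a*y + b*y^2) (a + 2*b*x) x := by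
      have h := ((hasDerivAt_id x).const_mul a).add ((hasDerivAt_pow 2 x).const_mul b)
      have h2 : a * 1 + b * (↑(2:ℕ) * x ^ (2-1)) = a + 2*b*x := by push_cast; ring
      rw [h2] at h
      exact h
    have h2 : HasDerivAt (fun y : ℝ => Real.sqrt (a*y + b*y^2))
        ((a + 2*b*x) / (2 * Real.sqrt (a*x + b*x^2))) x :=
      h1.sqrt (ne_of_gt haxbx)
    have h3 : HasDerivAt (fun y : ℝ => Real.sqrt (b/a) * Real.sqrt y)
        (Real.sqrt (b/a) * (1 / (2 * Real.sqrt x))) x :=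
      HasDerivAt.const_mul _ (Real.hasDerivAt_sqrt (ne_of_gt hx0))
    have h4 : HasDerivAt (fun y : ℝ => Real.arsinh (Real.sqrt (b/a) * Real.sqrt y))
        ((Real.sqrt (1 + (Real.sqrt (b/a) * Real.sqrt x)^2))⁻¹ •
          (Real.sqrt (b/a) * (1 / (2 * Real.sqrt x)))) x :=
      h3.arsinh
    have h5 := h2.add (h4.const_mul (a / Real.sqrt b))
    have key : (a + 2*b*x) / (2 * Real.sqrt (a*x + b*x^2)) +
        (a / Real.sqrt b) * ((Real.sqrt (1 + (Real.sqrt (b/a) * Real.sqrt x)^2))⁻¹ •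
          (Real.sqrt (b/a) * (1 / (2 * Real.sqrt x)))) = Real.sqrt (a/x + b) := by
      have hS : Real.sqrt (a*x + b*x^2) = Real.sqrt x * Real.sqrt (a + b*x) := by
        rw [show a*x + b*x^2 = x*(a + b*x) by ring, Real.sqrt_mul (le_of_lt hx0)]
      have hsq : (Real.sqrt (b/a) * Real.sqrt x)^2 = (b/a)*x := by
        rw [mul_pow, Real.sq_sqrt (by positivity : (0:ℝ) ≤ b/a), Real.sq_sqrt (le_of_lt hx0)]
      have h1p : 1 + (b/a)*x = (a + b*x)/a := by field_simp
      have hba : Real.sqrt (b/a) = Real.sqrt b / Real.sqrt a :=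
        Real.sqrt_div (le_of_lt hbpos) a
      have hsab : Real.sqrt (1 + (Real.sqrt (b/a) * Real.sqrt x)^2) =
          Real.sqrt (a + b*x) / Real.sqrt a := by
        rw [hsq, h1p, Real.sqrt_div (le_of_lt habx) a]
      have htarget : Real.sqrt (a/x + b) = Real.sqrt (a + b*x) / Real.sqrt x := by
        rw [show a/x + b = (a + b*x)/x by field_simp, Real.sqrt_div (le_of_lt habx) x]
      have hsab2 : Real.sqrt (a + b*x)^2 = a + b*x := Real.sq_sqrt (le_of_lt habx)
      have hsx2 : Real.sqrt x ^2 = x := Real.sq_sqrt (le_of_lt hx0)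
      rw [smul_eq_mul, hS, hsab, hba, htarget]
      have h2nd : (a / Real.sqrt b) * ((Real.sqrt (a + b*x) / Real.sqrt a)⁻¹ *
          (Real.sqrt b / Real.sqrt a * (1 / (2 * Real.sqrt x)))) =
          a / (2 * (Real.sqrt x * Real.sqrt (a + b*x))) := by
        field_simp
      rw [h2nd, ← add_div,
        show a + 2*b*x + a = 2 * Real.sqrt (a + b*x)^2 by rw [hsab2]; ring]
      exact (div_eq_div_iff
        (ne_of_gt (by positivity : (0:ℝ) < 2 * (Real.sqrt x * Real.sqrt (a + b*x))))
        (ne_of_gt sxpos)).mpr (by ring)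
    rw [← key]
    exact h5.hasDerivWithinAt
  have hFTC := intervalIntegral.integral_eq_sub_of_hasDeriv_right_of_le
    (le_of_lt hLpos) hcont hderiv hint
  have hF0 : F 0 = 0 := by
    rw [hFdef]
    simp [Real.sqrt_zero, Real.arsinh_zero]
  rw [hFTC, hF0, sub_zero]
  -- ================= numeric bound on (1/2) F L =================
  have hT1 : Real.sqrt (a*L + b*L^2) ≤ 1.10359209 :=
    (Real.sqrt_le_left (by norm_num)).mpr (aL_bound hapos hbpos hLpos ha2 hb2 hL2)
  obtain ⟨s, hsdef⟩ : ∃ x : ℝ, x = Real.sqrt (b/a) * Real.sqrt L := ⟨_, rfl⟩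
  have hs0 : 0 ≤ s := by rw [hsdef]; positivity
  have hssq : s^2 = (b/a)*L := by
    rw [hsdef, mul_pow, Real.sq_sqrt (by positivity : (0:ℝ) ≤ b/a),
      Real.sq_sqrt (le_of_lt hLpos)]
  have hsU : s^2 ≤ 1.12178929 := by
    rw [hssq]
    calc (b/a)*L ≤ (2.15030541/1.04685086)*0.5461299 := by
          apply mul_le_mul _ hL2 (le_of_lt hLpos) (by positivity)
          exact div_le_div₀ (by norm_num) hb2 (by linarith) ha1
    _ ≤ 1.12178929 := by norm_num
  have hsle : s ≤ 1.05914555 := s_bound hs0 hsU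
  have hsqrt1s : Real.sqrt (1 + s^2) ≤ 1.4566363 :=
    (Real.sqrt_le_left (by norm_num)).mpr (sqrt_one_add_sq_bound hsU)
  have harsinh : Real.arsinh s ≤ 0.925 := by
    rw [← Real.exp_le_exp, Real.exp_arsinh]
    have hser := Real.sum_le_exp_of_nonneg (by norm_num : (0:ℝ) ≤ 0.925) 6
    have hsum : (2.5157819:ℝ) ≤ ∑ i ∈ Finset.range 6, (0.925:ℝ)^i / (Nat.factorial i) := by
      simp [Finset.sum_range_succ, Nat.factorial]
      norm_num
    linarith
  have harsinh0 : 0 ≤ Real.arsinh s := Real.arsinh_nonneg_iff.mpr hs0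
  have hsb : (1.46592232:ℝ) ≤ Real.sqrt b :=
    (Real.le_sqrt (by norm_num) (le_of_lt hbpos)).mpr (by norm_num; linarith)
  have hA2 : a / Real.sqrt b ≤ 0.72018673 := by
    calc a / Real.sqrt b ≤ 1.0557378/1.46592232 :=
          div_le_div₀ (by norm_num) ha2 (by norm_num) hsb
    _ ≤ 0.72018673 := by norm_num
  have hA2pos : 0 ≤ a / Real.sqrt b := by positivity
  have hprod : (a / Real.sqrt b) * Real.arsinh s ≤ 0.72018673 * 0.925 :=
    mul_le_mul hA2 harsinh harsinh0 (by norm_num)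
  have hFL : F L = Real.sqrt (a*L + b*L^2) + (a / Real.sqrt b) * Real.arsinh s := by
    rw [hFdef, hsdef]
  rw [hFL]
  linarith [hT1, hprod]
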